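/- If each of n ≥ 2 nodes independently becomes a candidate with probability (12 ln n)/n and independently picks a uniform rank in {1, …, n⁴}, then with probability at least 1 − 1/n², simultaneously: at least one node is a candidate, at most 24 ln n nodes are candidates, and all n ranks are distinct. -/

import Mathlib

open MeasureTheory ProbabilityTheory
open scoped Classical

set_option maxHeartbeats 1000000 in
/-- If each of `n ≥ 2` nodes independently becomes a candidate with probability
`(12 ln n)/n` and independently picks a uniform rank in `{1, …, n⁴}`, then with
probability at least `1 - 1/n²`: at least one node is a candidate, at most
`24 ln n` nodes are candidates, and all `n` ranks are distinct. -/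
theorem prob_good_candidates_and_ranks
    {Ω : Type*} [MeasureSpace Ω] [IsProbabilityMeasure (ℙ : Measure Ω)]
    (n : ℕ) (hn : 2 ≤ n)
    (X : Fin n → Ω → Bool × ℕ)
    (hmeas : ∀ i, Measurable (X i))
    (hind : iIndepFun X ℙ)
    (hcand : ∀ i, ℙ {ω | (X i ω).1 = true} = ENNReal.ofReal (12 * Real.log n / n))
    (hrank : ∀ i, Measure.map (fun ω => (X i ω).2) ℙ =
      (PMF.uniformOfFinset (Finset.Icc 1 (n ^ 4))
        (Finset.nonempty_Icc.mpr (Nat.one_le_pow 4 n (by omega)))).toMeasure) :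
    ENNReal.ofReal (1 - ((n : ℝ) ^ 2)⁻¹) ≤
      ℙ {ω | (∃ i, (X i ω).1 = true) ∧
          ((Finset.univ.filter (fun i => (X i ω).1 = true)).card : ℝ) ≤
            24 * Real.log n ∧
          Function.Injective (fun i => (X i ω).2)} := by
  have hn0 : (0:ℝ) < n := by positivity
  have hn2 : (2:ℝ) ≤ n := by exact_mod_cast hn
  set p : ℝ := 12 * Real.log n / n with hp_def
  have hlogn : 0 < Real.log n := Real.log_pos (by exact_mod_cast hn)
  have hp0 : 0 ≤ p := by positivity
  -- candidate sets
  set C : Fin n → Set Ω := fun i => (X i) ⁻¹' {q : Bool × ℕ | q.1 = true} with hC_def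
  have hCmeas : ∀ i, MeasurableSet (C i) :=
    fun i => (hmeas i) (measurable_fst (measurableSet_singleton true))
  have hPC : ∀ i, ℙ (C i) = ENNReal.ofReal p := fun i => hcand i
  -- p ≤ 1
  have hp1 : p ≤ 1 := by
    have := prob_le_one (μ := (ℙ : Measure Ω)) (s := C ⟨0, by omega⟩)
    rw [hPC] at this
    exact_mod_cast ENNReal.ofReal_le_one.mp this
  have h12 : 12 * Real.log n ≤ n := by
    have := (div_le_one hn0).mp hp1
    linarith
  have hn9 : (9:ℝ) ≤ n := by
    have hl2 : Real.log 2 ≤ Real.log n := Real.log_le_log (by norm_num) hn2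
    have := Real.log_two_gt_d9
    have h8 : (8:ℝ) < n := by nlinarith
    have : (8:ℕ) < n := by exact_mod_cast h8
    exact_mod_cast this
  have hlog2n : (2:ℝ) ≤ Real.log n := by
    rw [Real.le_log_iff_exp_le hn0]
    have h := Real.exp_one_lt_d9
    have : Real.exp 2 = Real.exp 1 * Real.exp 1 := by
      rw [← Real.exp_add]; norm_num
    nlinarith [Real.exp_pos 1]
  -- the indicator variables
  set Z : Fin n → Ω → ℝ := fun i ω => if (X i ω).1 = true then 1 else 0 with hZ_def
  have hZmeas : ∀ i, Measurable (Z i) :=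
    fun i => Measurable.ite (hCmeas i) measurable_const measurable_const
  have hZind : iIndepFun Z ℙ := by
    have := hind.comp (fun _ (q : Bool × ℕ) => if q.1 = true then (1:ℝ) else 0)
      (fun _ => Measurable.ite (measurable_fst (measurableSet_singleton true))
        measurable_const measurable_const)
    exact this
  have hZind' : ∀ i, Z i = (C i).indicator (fun _ => (1:ℝ)) := by
    intro i
    funext ω
    simp only [hZ_def, hC_def, Set.indicator_apply, Set.mem_preimage, Set.mem_setOf_eq]
  have hZint : ∀ i, Integrable (Z i) ℙ := by
    intro i
    rw [hZind' i]
    exact (integrable_const (1:ℝ)).indicator (hCmeas i)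
  have hZEint : ∀ (t : ℝ) i, Integrable (fun ω => Real.exp (t * Z i ω)) ℙ := by
    intro t i
    have heq : (fun ω => Real.exp (t * Z i ω))
        = fun ω => (Real.exp t - 1) * Z i ω + 1 := by
      funext ω
      by_cases h : (X i ω).1 = true <;> simp [hZ_def, h]
    rw [heq]
    exact (((hZint i).const_mul _).add (integrable_const 1))
  have hEZ : ∀ i, ∫ ω, Z i ω ∂ℙ = p := by
    intro i
    rw [hZind' i]
    rw [MeasureTheory.integral_indicator_const (1:ℝ) (hCmeas i), measureReal_def, hPC i,
      ENNReal.toReal_ofReal hp0, smul_eq_mul, mul_one]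
  have hmgf : ∀ (t : ℝ) i, mgf (Z i) ℙ t = (Real.exp t - 1) * p + 1 := by
    intro t i
    have heq : (fun ω => Real.exp (t * Z i ω))
        = fun ω => (Real.exp t - 1) * Z i ω + 1 := by
      funext ω
      by_cases h : (X i ω).1 = true <;> simp [hZ_def, h]
    rw [mgf, heq]
    rw [integral_add (((hZint _).const_mul _)) (integrable_const 1),
      integral_const_mul, hEZ, integral_const]
    simp
  -- The count function
  set S : Ω → ℝ := ∑ i, Z i with hS_def
  have hSapp : ∀ ω, S ω = ∑ i, Z i ω := by intro ω; simp [hS_def]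
  have hScount : ∀ ω,
      ((Finset.univ.filter (fun i => (X i ω).1 = true)).card : ℝ) = S ω := by
    intro ω
    rw [hSapp, Finset.card_filter]
    push_cast
    simp [hZ_def]
  have hSmeas : Measurable S := by
    have : Measurable (fun ω => ∑ i, Z i ω) :=
      Finset.measurable_sum Finset.univ (fun i _ => hZmeas i)
    convert this using 1
    funext ω; exact hSapp ω
  -- rank sets
  set R : Fin n → ℕ → Set Ω := fun i v => (fun ω => (X i ω).2) ⁻¹' {v} with hR_def
  have hRmeas : ∀ i v, MeasurableSet (R i v) :=
    fun i v => (measurable_snd.comp (hmeas i)) (measurableSet_singleton v)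
  have hRval : ∀ i v, ℙ (R i v) =
      (PMF.uniformOfFinset (Finset.Icc 1 (n ^ 4))
        (Finset.nonempty_Icc.mpr (Nat.one_le_pow 4 n (by omega)))) v := by
    intro i v
    have h1 : ℙ (R i v) = Measure.map (fun ω => (X i ω).2) ℙ {v} :=
      (Measure.map_apply (measurable_snd.comp (hmeas i)) (measurableSet_singleton v)).symm
    rw [h1, hrank i, PMF.toMeasure_apply_singleton _ _ (measurableSet_singleton v)]
  have hRval' : ∀ i v, v ∈ Finset.Icc 1 (n ^ 4) →
      ℙ (R i v) = ((n : ENNReal) ^ 4)⁻¹ := by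
    intro i v hv
    rw [hRval i v, PMF.uniformOfFinset_apply, if_pos hv, Nat.card_Icc]
    norm_num
  -- out-of-range event is null
  have hOut : ∀ i, ℙ {ω | (X i ω).2 ∉ Finset.Icc 1 (n ^ 4)} = 0 := by
    intro i
    have h1 : {ω | (X i ω).2 ∉ Finset.Icc 1 (n ^ 4)}
        = (fun ω => (X i ω).2) ⁻¹' ((↑(Finset.Icc 1 (n ^ 4)) : Set ℕ)ᶜ) := by
      ext ω; simp
    have h2 : ℙ ((fun ω => (X i ω).2) ⁻¹' ((↑(Finset.Icc 1 (n ^ 4)) : Set ℕ)ᶜ))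
        = Measure.map (fun ω => (X i ω).2) ℙ ((↑(Finset.Icc 1 (n ^ 4)) : Set ℕ)ᶜ) :=
      (Measure.map_apply (measurable_snd.comp (hmeas i))
        (MeasurableSet.compl (Finset.measurableSet _))).symm
    rw [h1, h2, hrank i]
    refine (PMF.toMeasure_apply_eq_zero_iff _
      (MeasurableSet.compl (Finset.measurableSet _))).mpr ?_
    rw [PMF.support_uniformOfFinset]
    exact disjoint_compl_right
  -- Event A : no candidate
  set A : Set Ω := ⋂ i, (C i)ᶜ with hA_def
  have hAmeas : MeasurableSet A := MeasurableSet.iInter fun i => (hCmeas i).compl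
  have hPA : ℙ A = ENNReal.ofReal (1 - p) ^ n := by
    have h1 : ℙ A = ∏ i, ℙ ((C i)ᶜ) :=
      hind.meas_iInter fun i => ⟨({q : Bool × ℕ | q.1 = true})ᶜ,
        (measurable_fst (measurableSet_singleton true)).compl, rfl⟩
    have h2 : ∀ i, ℙ ((C i)ᶜ) = ENNReal.ofReal (1 - p) := by
      intro i
      rw [prob_compl_eq_one_sub (hCmeas i), hPC i, ← ENNReal.ofReal_one,
        ← ENNReal.ofReal_sub _ hp0]
    rw [h1]
    simp [h2, Finset.prod_const]
  have hPA' : (ℙ A).toReal ≤ 1 / (4 * (n:ℝ)^2) := by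
    rw [hPA, ENNReal.toReal_pow, ENNReal.toReal_ofReal (by linarith)]
    have e1 : (1 - p) ^ n ≤ Real.exp (-p) ^ n :=
      pow_le_pow_left₀ (by linarith) (by linarith [Real.add_one_le_exp (-p)]) n
    have e2 : Real.exp (-p) ^ n = Real.exp ((n:ℝ) * (-p)) := (Real.exp_nat_mul _ n).symm
    have e3 : (n:ℝ) * (-p) = -(12 * Real.log n) := by
      rw [hp_def]; field_simp
    have e4 : Real.exp (-(12 * Real.log n)) = ((n:ℝ)^12)⁻¹ := by
      rw [Real.exp_neg]
      congr 1
      rw [show (12:ℝ) * Real.log n = ((12:ℕ):ℝ) * Real.log n by norm_num,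
        Real.exp_nat_mul, Real.exp_log hn0]
    have e5 : ((n:ℝ)^12)⁻¹ ≤ 1 / (4 * (n:ℝ)^2) := by
      rw [one_div]
      apply inv_anti₀ (by positivity)
      have h10 : (2:ℝ)^10 ≤ (n:ℝ)^10 := pow_le_pow_left₀ (by norm_num) hn2 10
      nlinarith [sq_nonneg ((n:ℝ))]
    calc (1-p)^n ≤ Real.exp ((n:ℝ) * (-p)) := e2 ▸ e1
    _ = ((n:ℝ)^12)⁻¹ := by rw [e3, e4]
    _ ≤ 1 / (4 * (n:ℝ)^2) := e5
  -- Event B : too many candidates (Chernoff bound at t = log 2)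
  set t : ℝ := Real.log 2 with ht_def
  have ht0 : 0 ≤ t := Real.log_nonneg (by norm_num)
  have hexpt : Real.exp t = 2 := Real.exp_log (by norm_num)
  set B : Set Ω := {ω | 24 * Real.log n ≤ S ω} with hB_def
  have hBmeas : MeasurableSet B := hSmeas measurableSet_Ici
  have hint : Integrable (fun ω => Real.exp (t * S ω)) ℙ :=
    hZind.integrable_exp_mul_sum hZmeas (fun i _ => hZEint t i)
  have hPB : (ℙ B).toReal ≤ 1 / (4 * (n:ℝ)^2) := by
    have h1 : (ℙ B).toReal ≤ Real.exp (-t * (24 * Real.log n)) * mgf S ℙ t :=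
      measure_ge_le_exp_mul_mgf _ ht0 hint
    have h2 : mgf S ℙ t = ((Real.exp t - 1) * p + 1) ^ n := by
      rw [hS_def, hZind.mgf_sum hZmeas]
      simp [hmgf t]
    have h3 : ((Real.exp t - 1) * p + 1) ^ n ≤ Real.exp (12 * Real.log n) := by
      have hnp : (n:ℝ) * p = 12 * Real.log n := by rw [hp_def]; field_simp
      calc ((Real.exp t - 1) * p + 1) ^ n ≤ Real.exp p ^ n := by
            apply pow_le_pow_left₀ (by nlinarith)
            nlinarith [Real.add_one_le_exp p]
      _ = Real.exp ((n:ℝ) * p) := (Real.exp_nat_mul _ _).symm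
      _ = Real.exp (12 * Real.log n) := by rw [hnp]
    have h4 : (ℙ B).toReal ≤ Real.exp (-t * (24 * Real.log n) + 12 * Real.log n) := by
      rw [Real.exp_add]
      calc (ℙ B).toReal ≤ Real.exp (-t * (24 * Real.log n)) * mgf S ℙ t := h1
      _ ≤ Real.exp (-t * (24 * Real.log n)) * Real.exp (12 * Real.log n) := by
          apply mul_le_mul_of_nonneg_left (h2 ▸ h3) (Real.exp_pos _).le
    have h5 : Real.exp (-t * (24 * Real.log n) + 12 * Real.log n) ≤ 1 / (4 * (n:ℝ)^2) := by
      rw [show (1:ℝ) / (4 * (n:ℝ)^2) = Real.exp (Real.log (1 / (4 * (n:ℝ)^2)))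
        from (Real.exp_log (by positivity)).symm]
      apply Real.exp_le_exp.mpr
      have hlog : Real.log (1 / (4 * (n:ℝ)^2)) = -(Real.log 4 + 2 * Real.log n) := by
        rw [one_div, Real.log_inv, Real.log_mul (by norm_num) (by positivity),
          Real.log_pow]
        push_cast; ring
      have hl4 : Real.log 4 = 2 * Real.log 2 := by
        rw [show (4:ℝ) = 2^2 by norm_num, Real.log_pow]; push_cast; ring
      rw [hlog, hl4]
      have hlt1 := Real.log_two_gt_d9
      have hlt2 := Real.log_two_lt_d9
      have key : (24 * t - 14) * 2 ≤ (24 * t - 14) * Real.log n :=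
        mul_le_mul_of_nonneg_left hlog2n (by rw [ht_def]; nlinarith)
      rw [ht_def] at key ⊢
      nlinarith
    linarith
  -- Event E : some rank collision
  set D : Fin n → Fin n → Set Ω := fun i j => {ω | (X i ω).2 = (X j ω).2} with hD_def
  have hDeq : ∀ i j, D i j = ⋃ v : ℕ, R i v ∩ R j v := by
    intro i j
    ext ω
    simp only [hD_def, hR_def, Set.mem_setOf_eq, Set.mem_iUnion, Set.mem_inter_iff,
      Set.mem_preimage, Set.mem_singleton_iff]
    constructor
    · intro h; exact ⟨(X i ω).2, rfl, h.symm⟩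
    · rintro ⟨v, h1, h2⟩; rw [h1, h2]
  have hDmeas : ∀ i j, MeasurableSet (D i j) := by
    intro i j
    rw [hDeq]
    exact MeasurableSet.iUnion fun v => (hRmeas i v).inter (hRmeas j v)
  have hDsub : ∀ i j, D i j ⊆
      (⋃ v ∈ Finset.Icc 1 (n^4), R i v ∩ R j v) ∪
        {ω | (X i ω).2 ∉ Finset.Icc 1 (n^4)} := by
    intro i j ω hω
    by_cases h : (X i ω).2 ∈ Finset.Icc 1 (n^4)
    · left
      refine Set.mem_biUnion h ?_
      refine ⟨rfl, ?_⟩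
      simp only [hR_def, Set.mem_preimage, Set.mem_singleton_iff]
      exact hω.symm
    · right; exact h
  have hPD : ∀ i j, i ≠ j → ℙ (D i j) ≤ ((n : ENNReal)^4)⁻¹ := by
    intro i j hij
    have hindij : IndepFun (fun ω => (X i ω).2) (fun ω => (X j ω).2) ℙ :=
      (hind.indepFun hij).comp measurable_snd measurable_snd
    have hRR : ∀ v ∈ Finset.Icc 1 (n^4),
        ℙ (R i v ∩ R j v) = ((n:ENNReal)^4)⁻¹ * ((n:ENNReal)^4)⁻¹ := by
      intro v hv
      have hmul := hindij.measure_inter_preimage_eq_mul {v} {v}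
        (measurableSet_singleton v) (measurableSet_singleton v)
      have : ℙ (R i v ∩ R j v) = ℙ (R i v) * ℙ (R j v) := hmul
      rw [this, hRval' i v hv, hRval' j v hv]
    have hne : ((n:ENNReal)^4)⁻¹ * ((n:ENNReal)^4)⁻¹ ≠ ⊤ := by
      apply ENNReal.mul_ne_top <;>
        simp [ENNReal.inv_ne_top] <;> positivity
    calc ℙ (D i j)
        ≤ ℙ ((⋃ v ∈ Finset.Icc 1 (n^4), R i v ∩ R j v) ∪
            {ω | (X i ω).2 ∉ Finset.Icc 1 (n^4)}) := measure_mono (hDsub i j)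
      _ ≤ ℙ (⋃ v ∈ Finset.Icc 1 (n^4), R i v ∩ R j v) +
            ℙ {ω | (X i ω).2 ∉ Finset.Icc 1 (n^4)} := measure_union_le _ _
      _ = ℙ (⋃ v ∈ Finset.Icc 1 (n^4), R i v ∩ R j v) := by rw [hOut i, add_zero]
      _ ≤ ∑ v ∈ Finset.Icc 1 (n^4), ℙ (R i v ∩ R j v) := measure_biUnion_finset_le _ _
      _ = ∑ v ∈ Finset.Icc 1 (n^4), ((n:ENNReal)^4)⁻¹ * ((n:ENNReal)^4)⁻¹ :=
          Finset.sum_congr rfl hRR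
      _ = ((n:ENNReal)^4) * (((n:ENNReal)^4)⁻¹ * ((n:ENNReal)^4)⁻¹) := by
          rw [Finset.sum_const, Nat.card_Icc, nsmul_eq_mul]
          congr 1
          push_cast
          norm_num
      _ = ((n:ENNReal)^4)⁻¹ := by
          rw [← mul_assoc, ENNReal.mul_inv_cancel (by positivity) (by simp), one_mul]
  set P : Finset (Fin n × Fin n) := Finset.univ.filter (fun q => q.1 < q.2) with hP_def
  set E : Set Ω := ⋃ q ∈ P, D q.1 q.2 with hE_def
  have hEmeas : MeasurableSet E :=
    MeasurableSet.biUnion P.countable_toSet fun q _ => hDmeas q.1 q.2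
  have hcardP : 2 * P.card ≤ n * n := by
    have h1 : (P.image Prod.swap).card = P.card :=
      Finset.card_image_of_injective _ Prod.swap_injective
    have hdisj : Disjoint P (P.image Prod.swap) := by
      rw [Finset.disjoint_left]
      intro q hq hq'
      simp only [hP_def, Finset.mem_filter, Finset.mem_univ, true_and] at hq
      obtain ⟨r, hr, hrq⟩ := Finset.mem_image.mp hq'
      simp only [hP_def, Finset.mem_filter, Finset.mem_univ, true_and] at hr
      rw [← hrq] at hq
      simp only [Prod.fst_swap, Prod.snd_swap] at hq
      exact absurd hq (not_lt.mpr hr.le)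
    calc 2 * P.card = P.card + (P.image Prod.swap).card := by rw [h1]; ring
    _ = (P ∪ P.image Prod.swap).card := (Finset.card_union_of_disjoint hdisj).symm
    _ ≤ (Finset.univ : Finset (Fin n × Fin n)).card :=
        Finset.card_le_card (Finset.subset_univ _)
    _ = n * n := by simp
  have hPE : (ℙ E).toReal ≤ 1 / (2 * (n:ℝ)^2) := by
    have h1 : ℙ E ≤ (P.card : ENNReal) * ((n:ENNReal)^4)⁻¹ := by
      calc ℙ E ≤ ∑ q ∈ P, ℙ (D q.1 q.2) := measure_biUnion_finset_le _ _
      _ ≤ ∑ _q ∈ P, ((n:ENNReal)^4)⁻¹ := by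
          refine Finset.sum_le_sum fun q hq => ?_
          refine hPD q.1 q.2 (ne_of_lt ?_)
          simpa [hP_def] using hq
      _ = (P.card : ENNReal) * ((n:ENNReal)^4)⁻¹ := by
          rw [Finset.sum_const, nsmul_eq_mul]
    have hfin : (P.card : ENNReal) * ((n:ENNReal)^4)⁻¹ ≠ ⊤ := by
      apply ENNReal.mul_ne_top (ENNReal.natCast_ne_top _)
      simp [ENNReal.inv_ne_top]
      positivity
    have h2 := ENNReal.toReal_mono hfin h1
    rw [ENNReal.toReal_mul, ENNReal.toReal_inv, ENNReal.toReal_pow] at h2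
    simp only [ENNReal.toReal_natCast] at h2
    have hcard : (P.card : ℝ) ≤ (n:ℝ) * n / 2 := by
      have : ((2 * P.card : ℕ) : ℝ) ≤ ((n * n : ℕ) : ℝ) := by exact_mod_cast hcardP
      push_cast at this
      linarith
    calc (ℙ E).toReal ≤ (P.card : ℝ) * ((n:ℝ)^4)⁻¹ := h2
    _ ≤ ((n:ℝ) * n / 2) * ((n:ℝ)^4)⁻¹ := by
        apply mul_le_mul_of_nonneg_right hcard (by positivity)
    _ = 1 / (2 * (n:ℝ)^2) := by field_simp
  have hInjSub : {ω | ¬ Function.Injective (fun i => (X i ω).2)} ⊆ E := by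
    intro ω hω
    simp only [Set.mem_setOf_eq, Function.Injective] at hω
    push_neg at hω
    obtain ⟨i, j, hEqv, hij⟩ := hω
    rcases lt_or_gt_of_ne hij with h | h
    · refine Set.mem_biUnion
        (show ((i, j) : Fin n × Fin n) ∈ (P : Set (Fin n × Fin n)) by
          simp [hP_def, h]) ?_
      exact hEqv
    · refine Set.mem_biUnion
        (show ((j, i) : Fin n × Fin n) ∈ (P : Set (Fin n × Fin n)) by
          simp [hP_def, h]) ?_
      exact hEqv.symm
  -- the good event
  set G : Set Ω := {ω | (∃ i, (X i ω).1 = true) ∧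
      ((Finset.univ.filter (fun i => (X i ω).1 = true)).card : ℝ) ≤
        24 * Real.log n ∧
      Function.Injective (fun i => (X i ω).2)} with hG_def
  have hG1 : MeasurableSet {ω : Ω | ∃ i, (X i ω).1 = true} := by
    have : {ω : Ω | ∃ i, (X i ω).1 = true} = ⋃ i, C i := by
      ext ω; simp [hC_def]
    rw [this]
    exact MeasurableSet.iUnion fun i => hCmeas i
  have hG2 : MeasurableSet {ω : Ω |
      ((Finset.univ.filter (fun i => (X i ω).1 = true)).card : ℝ) ≤ 24 * Real.log n} := by
    have : {ω : Ω | ((Finset.univ.filter (fun i => (X i ω).1 = true)).card : ℝ) ≤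
        24 * Real.log n} = S ⁻¹' Set.Iic (24 * Real.log n) := by
      ext ω
      simp only [Set.mem_setOf_eq, Set.mem_preimage, Set.mem_Iic, hScount ω]
    rw [this]
    exact hSmeas measurableSet_Iic
  have hG3 : MeasurableSet {ω : Ω | Function.Injective fun i => (X i ω).2} := by
    have : {ω : Ω | Function.Injective fun i => (X i ω).2}
        = ⋂ i, ⋂ j, {ω | (X i ω).2 = (X j ω).2 → i = j} := by
      ext ω
      simp only [Set.mem_setOf_eq, Set.mem_iInter, Function.Injective]
    rw [this]
    refine MeasurableSet.iInter fun i => MeasurableSet.iInter fun j => ?_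
    by_cases h : i = j
    · subst h
      have : {ω : Ω | (X i ω).2 = (X i ω).2 → i = i} = Set.univ := by
        ext ω; simp
      rw [this]; exact MeasurableSet.univ
    · have : {ω : Ω | (X i ω).2 = (X j ω).2 → i = j} = (D i j)ᶜ := by
        ext ω
        simp only [Set.mem_setOf_eq, Set.mem_compl_iff, hD_def]
        constructor
        · intro hh hc; exact h (hh hc)
        · intro hh hc; exact absurd hc hh
      rw [this]; exact (hDmeas i j).compl
  have hGmeas : MeasurableSet G := by
    rw [hG_def, Set.setOf_and, Set.setOf_and]
    exact hG1.inter (hG2.inter hG3)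
  -- the complement of the good event is contained in the union of bad events
  have hGc : Gᶜ ⊆ A ∪ B ∪ E := by
    intro ω hω
    simp only [hG_def, Set.mem_compl_iff, Set.mem_setOf_eq, not_and_or] at hω
    rcases hω with h1 | h23
    · left; left
      push_neg at h1
      rw [hA_def]
      refine Set.mem_iInter.mpr fun i => ?_
      exact h1 i
    · rcases h23 with h2 | h3
      · left; right
        rw [hB_def]
        have := lt_of_not_ge h2
        rw [hScount ω] at this
        exact this.le
      · right
        exact hInjSub h3
  have hsum : ℙ Gᶜ ≤ ℙ A + ℙ B + ℙ E := by
    calc ℙ Gᶜ ≤ ℙ (A ∪ B ∪ E) := measure_mono hGc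
    _ ≤ ℙ (A ∪ B) + ℙ E := measure_union_le _ _
    _ ≤ ℙ A + ℙ B + ℙ E := add_le_add (measure_union_le _ _) le_rfl
  have htotal : (ℙ Gᶜ).toReal ≤ ((n:ℝ)^2)⁻¹ := by
    have hfin : ℙ A + ℙ B + ℙ E ≠ ⊤ := by
      refine ENNReal.add_ne_top.mpr ⟨ENNReal.add_ne_top.mpr ⟨?_, ?_⟩, ?_⟩ <;>
        exact measure_ne_top _ _
    have h := ENNReal.toReal_mono hfin hsum
    rw [ENNReal.toReal_add (ENNReal.add_ne_top.mpr
        ⟨measure_ne_top _ _, measure_ne_top _ _⟩) (measure_ne_top _ _),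
      ENNReal.toReal_add (measure_ne_top _ _) (measure_ne_top _ _)] at h
    have harith : 1 / (4 * (n:ℝ)^2) + 1 / (4 * (n:ℝ)^2) + 1 / (2 * (n:ℝ)^2)
        = ((n:ℝ)^2)⁻¹ := by
      field_simp
      ring
    linarith [hPA', hPB, hPE]
  have hGcle : ℙ Gᶜ ≤ ENNReal.ofReal (((n:ℝ)^2)⁻¹) := by
    rw [← ENNReal.ofReal_toReal (measure_ne_top ℙ Gᶜ)]
    exact ENNReal.ofReal_le_ofReal htotal
  have hPG : ℙ G = 1 - ℙ Gᶜ := by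
    have := prob_compl_eq_one_sub (μ := (ℙ : Measure Ω)) hGmeas.compl
    rwa [compl_compl] at this
  calc ENNReal.ofReal (1 - ((n:ℝ)^2)⁻¹)
      = 1 - ENNReal.ofReal (((n:ℝ)^2)⁻¹) := by
        rw [ENNReal.ofReal_sub _ (by positivity), ENNReal.ofReal_one]
    _ ≤ 1 - ℙ Gᶜ := tsub_le_tsub_left hGcle 1
    _ = ℙ G := hPG.symm
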